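/- Let k ≥ 2 and let σ ∈ S_k be the permutation with one-line notation k 1 2 … (k−1) (i.e., σ(1)=k and σ(i)=i−1 for 2 ≤ i ≤ k). Then for every n ≥ k, the subgroup ⟨S_n({132, 231, 321, σ})⟩ of S_n is isomorphic to the symmetric group S_{k−1}. -/

import Mathlib

/-- A permutation `π ∈ S_n` contains the pattern `τ ∈ S_k` if there is a strictly
increasing `f : Fin k → Fin n` such that `τ a < τ b ↔ π (f a) < π (f b)`. -/
def PermContains {k n : ℕ} (τ : Equiv.Perm (Fin k)) (π : Equiv.Perm (Fin n)) : Prop :=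
  ∃ f : Fin k → Fin n, StrictMono f ∧ ∀ a b : Fin k, τ a < τ b ↔ π (f a) < π (f b)

/-- `avoidSet n T` is `S_n(T)`: the permutations of `Fin n` avoiding every pattern in `T`,
where `T` is a set of permutations of arbitrary lengths. -/
def avoidSet (n : ℕ) (T : Set (Σ k : ℕ, Equiv.Perm (Fin k))) : Set (Equiv.Perm (Fin n)) :=
  {π | ∀ τ ∈ T, ¬ PermContains τ.2 π}
/-- The pattern 132. -/
def p132 : Equiv.Perm (Fin 3) := Equiv.swap 1 2
/-- The pattern 231. -/
def p231 : Equiv.Perm (Fin 3) := finRotate 3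
/-- The pattern 321. -/
def p321 : Equiv.Perm (Fin 3) := Equiv.swap 0 2

private lemma card_lt_filter {n : ℕ} (π : Equiv.Perm (Fin n)) (c : Fin n) :
    (Finset.univ.filter (fun x => π x < c)).card = c.val := by
  have h : Finset.univ.filter (fun x => π x < c) = (Finset.Iio c).image π.symm := by
    ext x
    simp [Finset.mem_image, Equiv.symm_apply_eq, Finset.mem_Iio]
  rw [h, Finset.card_image_of_injective _ π.symm.injective, Fin.card_Iio]

private lemma monoIff {n : ℕ} {π : Equiv.Perm (Fin n)}
    (hmono : ∀ i j : Fin n, 0 < i.val → i < j → π i < π j)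
    {i j : Fin n} (hi : 0 < i.val) (hj : 0 < j.val) : π i < π j ↔ i < j := by
  constructor
  · intro h
    by_contra hij
    rcases lt_or_eq_of_le (not_lt.mp hij) with h' | h'
    · exact lt_asymm h (hmono j i hj h')
    · rw [h'] at h; exact lt_irrefl _ h
  · exact hmono i j hi

private lemma val_le {n : ℕ} {π : Equiv.Perm (Fin n)}
    (hmono : ∀ i j : Fin n, 0 < i.val → i < j → π i < π j)
    {i : Fin n} (hi : 0 < i.val) : (π i).val ≤ i.val := by
  have himg : (Finset.Ici i).image π ⊆ Finset.Ici (π i) := by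
    intro y hy
    simp only [Finset.mem_image, Finset.mem_Ici] at *
    obtain ⟨j, hj, rfl⟩ := hy
    rcases eq_or_lt_of_le hj with rfl | h
    · exact le_refl _
    · exact le_of_lt (hmono i j hi h)
  have hc := Finset.card_le_card himg
  rw [Finset.card_image_of_injective _ π.injective, Fin.card_Ici, Fin.card_Ici] at hc
  have h1 := i.isLt; have h2 := (π i).isLt
  omega

private lemma fix_high {n : ℕ} {π : Equiv.Perm (Fin n)} (pos : 0 < n)
    (hmono : ∀ i j : Fin n, 0 < i.val → i < j → π i < π j)
    (x : Fin n) (hx : 0 < x.val) (hlt : (π ⟨0, pos⟩).val < x.val) : π x = x := by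
  have hle : (π x).val ≤ x.val := val_le hmono hx
  by_contra hne
  have hlt2 : (π x).val < x.val := by
    rcases lt_or_eq_of_le hle with h | h
    · exact h
    · exact absurd (Fin.ext h) hne
  have hA : (Finset.Ioc (⟨0, pos⟩ : Fin n) x).card = x.val := by
    rw [Fin.card_Ioc]; rfl
  have himg : (Finset.Ioc (⟨0, pos⟩ : Fin n) x).image π ⊆ Finset.Iio x := by
    intro y hy
    simp only [Finset.mem_image, Finset.mem_Ioc] at hy
    obtain ⟨j, ⟨hj0, hjx⟩, rfl⟩ := hy
    simp only [Finset.mem_Iio]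
    rcases eq_or_lt_of_le hjx with rfl | hjlt
    · exact Fin.lt_def.mpr hlt2
    · exact lt_trans (hmono j x (Fin.lt_def.mp hj0) hjlt) (Fin.lt_def.mpr hlt2)
  have hcard : (Finset.Iio x).card ≤ ((Finset.Ioc (⟨0, pos⟩ : Fin n) x).image π).card := by
    rw [Finset.card_image_of_injective _ π.injective, hA, Fin.card_Iio]
  have heq := Finset.eq_of_subset_of_card_le himg hcard
  have hmem : π ⟨0, pos⟩ ∈ Finset.Iio x := Finset.mem_Iio.mpr (Fin.lt_def.mpr hlt)
  rw [← heq] at hmem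
  obtain ⟨j, hj, hjeq⟩ := Finset.mem_image.mp hmem
  have hj0 := π.injective hjeq
  rw [hj0] at hj
  simp [Finset.mem_Ioc] at hj

private lemma contains_of_three {n : ℕ} (τ : Equiv.Perm (Fin 3)) (π : Equiv.Perm (Fin n))
    {x y z : Fin n} (hxy : x < y) (hyz : y < z)
    (h01 : τ 0 < τ 1 ↔ π x < π y) (h02 : τ 0 < τ 2 ↔ π x < π z)
    (h12 : τ 1 < τ 2 ↔ π y < π z)
    (h10 : τ 1 < τ 0 ↔ π y < π x) (h20 : τ 2 < τ 0 ↔ π z < π x)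
    (h21 : τ 2 < τ 1 ↔ π z < π y) :
    PermContains τ π := by
  refine ⟨fun a => if a.val = 0 then x else if a.val = 1 then y else z, ?_, ?_⟩
  · intro a b hab
    fin_cases a <;> fin_cases b <;> simp_all <;>
      first
        | exact hxy | exact hyz | exact lt_trans hxy hyz
        | exact absurd hab (by decide) | rfl
  · intro a b
    fin_cases a <;> fin_cases b
    exacts [iff_of_false (lt_irrefl _) (lt_irrefl _), h01, h02,
      h10, iff_of_false (lt_irrefl _) (lt_irrefl _), h12,
      h20, h21, iff_of_false (lt_irrefl _) (lt_irrefl _)]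

private lemma mono_of_avoid {n : ℕ} {π : Equiv.Perm (Fin n)}
    (h132 : ¬ PermContains p132 π) (h231 : ¬ PermContains p231 π)
    (h321 : ¬ PermContains p321 π) :
    ∀ i j : Fin n, 0 < i.val → i < j → π i < π j := by
  intro i j hi hij
  by_contra hn
  have pos : 0 < n := i.pos
  set z : Fin n := ⟨0, pos⟩ with hz
  have hzi : z < i := by rw [Fin.lt_def]; exact hi
  have hji : π j < π i := by
    rcases lt_or_eq_of_le (not_lt.mp hn) with h | h
    · exact h
    · exact absurd (π.injective h) (ne_of_gt hij)
  rcases lt_trichotomy (π z) (π j) with h0 | h0 | h0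
  · exact h132 (contains_of_three p132 π hzi hij
      (iff_of_true (by decide) (lt_trans h0 hji))
      (iff_of_true (by decide) h0)
      (iff_of_false (by decide) (lt_asymm hji))
      (iff_of_false (by decide) (lt_asymm (lt_trans h0 hji)))
      (iff_of_false (by decide) (lt_asymm h0))
      (iff_of_true (by decide) hji))
  · exact absurd (π.injective h0) (ne_of_lt (lt_trans hzi hij))
  · rcases lt_trichotomy (π z) (π i) with h1 | h1 | h1
    · exact h231 (contains_of_three p231 π hzi hij
        (iff_of_true (by decide) h1)
        (iff_of_false (by decide) (lt_asymm h0))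
        (iff_of_false (by decide) (lt_asymm hji))
        (iff_of_false (by decide) (lt_asymm h1))
        (iff_of_true (by decide) h0)
        (iff_of_true (by decide) hji))
    · exact absurd (π.injective h1) (ne_of_lt hzi)
    · exact h321 (contains_of_three p321 π hzi hij
        (iff_of_false (by decide) (lt_asymm h1))
        (iff_of_false (by decide) (lt_asymm (lt_trans hji h1)))
        (iff_of_false (by decide) (lt_asymm hji))
        (iff_of_true (by decide) h1)
        (iff_of_true (by decide) (lt_trans hji h1))
        (iff_of_true (by decide) hji))

private lemma not_contains_three {n : ℕ} {π : Equiv.Perm (Fin n)}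
    (hmono : ∀ i j : Fin n, 0 < i.val → i < j → π i < π j)
    {τ : Equiv.Perm (Fin 3)} (hτ : τ 2 < τ 1) :
    ¬ PermContains τ π := by
  rintro ⟨f, hf, hiff⟩
  have h1 : (0:Fin 3) < 1 := by decide
  have h2 : (1:Fin 3) < 2 := by decide
  have hf1 : 0 < (f 1).val := lt_of_le_of_lt (Nat.zero_le _) (Fin.lt_def.mp (hf h1))
  have hd := (hiff 2 1).mp hτ
  exact lt_asymm hd (hmono (f 1) (f 2) hf1 (hf h2))

private lemma finRotate_inv_val {t : ℕ} (j : Fin (t+1)) :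
    (((finRotate (t+1))⁻¹) j).val = if j.val = 0 then t else j.val - 1 := by
  set y := (finRotate (t+1))⁻¹ j with hy
  have h : finRotate (t+1) y = j := by
    rw [hy]; exact Equiv.apply_symm_apply _ _
  rw [finRotate_succ_apply] at h
  have hval := Fin.val_add_one y
  rw [h] at hval
  rcases eq_or_ne y (Fin.last t) with hl | hl
  · rw [if_pos (by rw [hval, if_pos hl]), hl, Fin.val_last]
  · rw [hval, if_neg hl]
    have : y.val + 1 ≠ 0 := Nat.succ_ne_zero _
    rw [if_neg this]
    omega

private lemma not_contains_sigma {n m : ℕ} {π : Equiv.Perm (Fin n)} (pos : 0 < n)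
    (hmono : ∀ i j : Fin n, 0 < i.val → i < j → π i < π j)
    (h0 : (π ⟨0, pos⟩).val ≤ m) :
    ¬ PermContains ((finRotate (m+2))⁻¹) π := by
  rintro ⟨f, hf, hiff⟩
  have hdesc : ∀ j : Fin (m+2), 0 < j.val → π (f j) < π (f 0) := by
    intro j hj
    refine (hiff j 0).mp ?_
    rw [Fin.lt_def, finRotate_inv_val, finRotate_inv_val]
    have hjlt := j.isLt
    split_ifs <;> simp_all <;> omega
  have hf0 : f 0 = ⟨0, pos⟩ := by
    apply Fin.ext
    by_contra h
    have h1 : (0 : Fin (m+2)) < ⟨1, by omega⟩ := by rw [Fin.lt_def]; simp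
    have hm := hmono (f 0) (f ⟨1, by omega⟩)
      (Nat.pos_of_ne_zero (by simpa using h)) (hf h1)
    exact lt_asymm hm (hdesc ⟨1, by omega⟩ (by simp))
  have hsub : (Finset.Ioi (0 : Fin (m+2))).image f ⊆
      Finset.univ.filter (fun x => π x < π ⟨0, pos⟩) := by
    intro y hy
    simp only [Finset.mem_image, Finset.mem_Ioi] at hy
    obtain ⟨j, hj, rfl⟩ := hy
    simp only [Finset.mem_filter, Finset.mem_univ, true_and]
    rw [← hf0]
    exact hdesc j (Fin.lt_def.mp hj)
  have hc1 := Finset.card_le_card hsub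
  rw [Finset.card_image_of_injective _ hf.injective, card_lt_filter, Fin.card_Ioi] at hc1
  simp only [Fin.val_zero] at hc1
  omega

private lemma val_zero_le {n m : ℕ} {π : Equiv.Perm (Fin n)} (pos : 0 < n)
    (hmono : ∀ i j : Fin n, 0 < i.val → i < j → π i < π j)
    (hσ : ¬ PermContains ((finRotate (m+2))⁻¹) π) : (π ⟨0, pos⟩).val ≤ m := by
  by_contra hcon
  push_neg at hcon
  set c := π ⟨0, pos⟩ with hc
  have hcard : (Finset.univ.filter (fun x => π x < c)).card = c.val := card_lt_filter π c
  obtain ⟨s, hs_sub, hs_card⟩ :=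
    Finset.exists_subset_card_eq (n := m+1) (s := Finset.univ.filter (fun x => π x < c))
      (by omega)
  set emb := s.orderEmbOfFin hs_card with hemb
  have hlt : ∀ i : Fin (m+1), π (emb i) < c := by
    intro i
    have := hs_sub (Finset.orderEmbOfFin_mem s hs_card i)
    simpa using this
  have hpos : ∀ i : Fin (m+1), 0 < (emb i).val := by
    intro i
    rcases Nat.eq_zero_or_pos (emb i).val with h | h
    · exfalso
      have h2 : emb i = ⟨0, pos⟩ := Fin.ext h
      have h3 := hlt i
      rw [h2, ← hc] at h3
      exact lt_irrefl _ h3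
    · exact h
  apply hσ
  refine ⟨fun j => if hj : j.val = 0 then ⟨0, pos⟩ else emb ⟨j.val - 1, by omega⟩, ?_, ?_⟩
  · intro a b hab
    rw [Fin.lt_def] at hab
    have hb : b.val ≠ 0 := by omega
    by_cases ha : a.val = 0
    · simp only [dif_pos ha, dif_neg hb]
      rw [Fin.lt_def]
      exact hpos _
    · simp only [dif_neg ha, dif_neg hb]
      exact emb.strictMono (by rw [Fin.lt_def]; simp; omega)
  · intro a b
    have halt := a.isLt
    have hblt := b.isLt
    by_cases ha : a.val = 0 <;> by_cases hb : b.val = 0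
    · have : a = b := Fin.ext (by omega)
      subst this
      simp
    · simp only [dif_pos ha, dif_neg hb]
      refine iff_of_false ?_ (lt_asymm (hlt _))
      rw [Fin.lt_def, finRotate_inv_val, finRotate_inv_val, if_pos ha, if_neg hb]
      omega
    · simp only [dif_neg ha, dif_pos hb]
      refine iff_of_true ?_ (hlt _)
      rw [Fin.lt_def, finRotate_inv_val, finRotate_inv_val, if_neg ha, if_pos hb]
      omega
    · simp only [dif_neg ha, dif_neg hb]
      rw [Fin.lt_def, finRotate_inv_val, finRotate_inv_val, if_neg ha, if_neg hb,
        monoIff hmono (hpos _) (hpos _), emb.lt_iff_lt, Fin.lt_def]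

private lemma phi_val {n t : ℕ} (h : t ≤ n) (ρ : Equiv.Perm (Fin t)) (x : Fin n) :
    ((Equiv.Perm.viaEmbeddingHom (Fin.castLEEmb h) ρ) x).val =
      if hx : x.val < t then (ρ ⟨x.val, hx⟩).val else x.val := by
  rw [Equiv.Perm.viaEmbeddingHom_apply]
  split_ifs with hx
  · have e1 : (Fin.castLEEmb h) ⟨x.val, hx⟩ = x := Fin.ext rfl
    conv_lhs => rw [← e1]
    rw [Equiv.Perm.viaEmbedding_apply]
    rfl
  · rw [Equiv.Perm.viaEmbedding_apply_of_notMem]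
    rintro ⟨y, rfl⟩
    exact hx (by simpa using y.isLt)

private lemma mem_range_of_fix {n t : ℕ} (h : t ≤ n) (π : Equiv.Perm (Fin n))
    (hfix : ∀ x : Fin n, t ≤ x.val → π x = x) :
    π ∈ (Equiv.Perm.viaEmbeddingHom (Fin.castLEEmb h)).range := by
  have hfix' : ∀ x : Fin n, t ≤ x.val → π⁻¹ x = x := by
    intro x hx
    conv_lhs => rw [← hfix x hx]
    exact Equiv.symm_apply_apply π x
  have hlow : ∀ x : Fin n, x.val < t → (π x).val < t := by
    intro x hx
    by_contra hcon
    have h1 := hfix' (π x) (not_lt.mp hcon)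
    rw [Equiv.Perm.inv_def, Equiv.symm_apply_apply] at h1
    exact hcon (by rw [← h1]; exact hx)
  have hlow' : ∀ x : Fin n, x.val < t → (π⁻¹ x).val < t := by
    intro x hx
    by_contra hcon
    have h1 := hfix (π⁻¹ x) (not_lt.mp hcon)
    rw [Equiv.Perm.inv_def, Equiv.apply_symm_apply] at h1
    rw [h1] at hx
    exact absurd hx (not_lt.mpr (not_lt.mp hcon))
  have hxlt : ∀ x : Fin t, (Fin.castLE h x).val < t := fun x => x.isLt
  refine ⟨⟨fun x => ⟨(π (Fin.castLE h x)).val, hlow _ (hxlt x)⟩,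
           fun x => ⟨(π⁻¹ (Fin.castLE h x)).val, hlow' _ (hxlt x)⟩, ?_, ?_⟩, ?_⟩
  · intro x
    apply Fin.ext
    show (π⁻¹ (Fin.castLE h ⟨(π (Fin.castLE h x)).val, _⟩)).val = x.val
    have e1 : Fin.castLE h (⟨(π (Fin.castLE h x)).val, hlow _ (hxlt x)⟩ : Fin t)
        = π (Fin.castLE h x) := Fin.ext rfl
    rw [e1, Equiv.Perm.inv_def, Equiv.symm_apply_apply]
    rfl
  · intro x
    apply Fin.ext
    show (π (Fin.castLE h ⟨(π⁻¹ (Fin.castLE h x)).val, _⟩)).val = x.val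
    have e1 : Fin.castLE h (⟨(π⁻¹ (Fin.castLE h x)).val, hlow' _ (hxlt x)⟩ : Fin t)
        = π⁻¹ (Fin.castLE h x) := Fin.ext rfl
    rw [e1, Equiv.Perm.inv_def, Equiv.apply_symm_apply]
    rfl
  · ext x
    rw [Equiv.Perm.viaEmbeddingHom_apply]
    by_cases hx : x.val < t
    · have e1 : (Fin.castLEEmb h) ⟨x.val, hx⟩ = x := Fin.ext rfl
      conv_lhs => rw [← e1]
      rw [Equiv.Perm.viaEmbedding_apply]
      rfl
    · rw [Equiv.Perm.viaEmbedding_apply_of_notMem, hfix x (not_lt.mp hx)]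
      rintro ⟨y, rfl⟩
      exact hx (by simpa using y.isLt)

private lemma mem_avoidSet {n m : ℕ} {π : Equiv.Perm (Fin n)} (pos : 0 < n)
    (hmono : ∀ i j : Fin n, 0 < i.val → i < j → π i < π j)
    (h0 : (π ⟨0, pos⟩).val ≤ m) :
    π ∈ avoidSet n ({⟨3, p132⟩, ⟨3, p231⟩, ⟨3, p321⟩, ⟨m+2, (finRotate (m+2))⁻¹⟩} :
      Set (Σ k : ℕ, Equiv.Perm (Fin k))) := by
  intro τ hτ
  simp only [Set.mem_insert_iff, Set.mem_singleton_iff] at hτ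
  rcases hτ with rfl | rfl | rfl | rfl
  · exact not_contains_three hmono (by decide)
  · exact not_contains_three hmono (by decide)
  · exact not_contains_three hmono (by decide)
  · exact not_contains_sigma pos hmono h0

/-- The permutation `k 1 2 … (k-1)` in one-line notation is the inverse of the
rotation `2 3 … k 1`. -/
theorem closure_avoid_gives_symm_of_pred (k : ℕ) (hk : 2 ≤ k) (n : ℕ) (hn : k ≤ n) :
    Nonempty (Subgroup.closure (avoidSet n
        ({⟨3, p132⟩, ⟨3, p231⟩, ⟨3, p321⟩, ⟨k, (finRotate k)⁻¹⟩} :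
          Set (Σ k : ℕ, Equiv.Perm (Fin k)))) ≃* Equiv.Perm (Fin (k - 1))) := by
  obtain ⟨m, rfl⟩ : ∃ m, k = m + 2 := ⟨k - 2, by omega⟩
  have pos : 0 < n := by omega
  have hmn : m + 1 ≤ n := by omega
  have key : Subgroup.closure (avoidSet n
      ({⟨3, p132⟩, ⟨3, p231⟩, ⟨3, p321⟩, ⟨m+2, (finRotate (m+2))⁻¹⟩} :
        Set (Σ k : ℕ, Equiv.Perm (Fin k))))
      = (Equiv.Perm.viaEmbeddingHom (Fin.castLEEmb hmn)).range := by
    apply le_antisymm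
    · rw [Subgroup.closure_le]
      intro π hπ
      have h132 : ¬ PermContains p132 π := hπ ⟨3, p132⟩ (by simp)
      have h231 : ¬ PermContains p231 π := hπ ⟨3, p231⟩ (by simp)
      have h321 : ¬ PermContains p321 π := hπ ⟨3, p321⟩ (by simp)
      have hσ : ¬ PermContains ((finRotate (m+2))⁻¹) π :=
        hπ ⟨m+2, (finRotate (m+2))⁻¹⟩ (by simp)
      have hmono := mono_of_avoid h132 h231 h321
      have h0 := val_zero_le pos hmono hσ
      exact mem_range_of_fix hmn π
        (fun x hx => fix_high pos hmono x (by omega) (by omega))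
    · rintro x ⟨ρ, rfl⟩
      rcases Nat.eq_zero_or_pos m with hm | hm
      · subst hm
        have hρ1 : ρ = 1 := by
          ext y
          have h1 := (ρ y).isLt
          have h2 := y.isLt
          omega
        rw [hρ1, map_one]
        exact Subgroup.one_mem _
      · obtain ⟨m', rfl⟩ : ∃ m', m = m' + 1 := ⟨m - 1, by omega⟩
        set Φ := Equiv.Perm.viaEmbeddingHom (Fin.castLEEmb hmn) with hΦ
        -- generator 1 : image of the inverse rotation
        have hval1 : ∀ x : Fin n, ((Φ ((finRotate (m'+2))⁻¹)) x).val =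
            if x.val < m'+2 then (if x.val = 0 then m'+1 else x.val - 1) else x.val := by
          intro x
          rw [hΦ, phi_val]
          by_cases h1 : x.val < m'+2
          · rw [dif_pos h1, if_pos h1, finRotate_inv_val]
          · rw [dif_neg h1, if_neg h1]
        have hmono1 : ∀ i j : Fin n, 0 < i.val → i < j →
            (Φ ((finRotate (m'+2))⁻¹)) i < (Φ ((finRotate (m'+2))⁻¹)) j := by
          intro i j hi hij
          rw [Fin.lt_def, hval1, hval1]
          rw [Fin.lt_def] at hij
          have := i.isLt; have := j.isLt
          split_ifs <;> omega
        have hzero1 : ((Φ ((finRotate (m'+2))⁻¹)) ⟨0, pos⟩).val ≤ m' + 1 := by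
          rw [hval1]
          norm_num
        have hg1 := mem_avoidSet (m := m'+1) pos hmono1 hzero1
        -- generator 2 : image of the swap 0 1
        have sval : ∀ y : Fin (m'+2), ((Equiv.swap (0 : Fin (m'+2)) 1) y).val =
            if y.val = 0 then 1 else if y.val = 1 then 0 else y.val := by
          intro y
          rw [Equiv.swap_apply_def]
          split_ifs with e1 e2 <;> simp only [Fin.ext_iff, Fin.val_zero, Fin.val_one] at * <;> omega
        have hval2 : ∀ x : Fin n, ((Φ (Equiv.swap (0 : Fin (m'+2)) 1)) x).val =
            if x.val < m'+2 then (if x.val = 0 then 1 else if x.val = 1 then 0 else x.val)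
            else x.val := by
          intro x
          rw [hΦ, phi_val]
          by_cases h1 : x.val < m'+2
          · rw [dif_pos h1, if_pos h1, sval]
          · rw [dif_neg h1, if_neg h1]
        have hmono2 : ∀ i j : Fin n, 0 < i.val → i < j →
            (Φ (Equiv.swap (0 : Fin (m'+2)) 1)) i < (Φ (Equiv.swap (0 : Fin (m'+2)) 1)) j := by
          intro i j hi hij
          rw [Fin.lt_def, hval2, hval2]
          rw [Fin.lt_def] at hij
          have := i.isLt; have := j.isLt
          split_ifs <;> omega
        have hzero2 : ((Φ (Equiv.swap (0 : Fin (m'+2)) 1)) ⟨0, pos⟩).val ≤ m' + 1 := by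
          rw [hval2]
          norm_num
        have hg2 := mem_avoidSet (m := m'+1) pos hmono2 hzero2
        -- closure of the two generators is everything
        have hcl : Subgroup.closure
            {finRotate (m'+2), Equiv.swap (0 : Fin (m'+2)) (finRotate (m'+2) 0)}
            = (⊤ : Subgroup (Equiv.Perm (Fin (m'+2)))) :=
          Equiv.Perm.closure_cycle_adjacent_swap isCycle_finRotate support_finRotate 0
        have hρ : ρ ∈ Subgroup.closure
            {finRotate (m'+2), Equiv.swap (0 : Fin (m'+2)) (finRotate (m'+2) 0)} := by
          rw [hcl]; trivial
        refine Subgroup.closure_induction ?_ ?_ ?_ ?_ hρ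
        · intro y hy
          rcases hy with rfl | rfl
          · have h1 : Φ (finRotate (m'+2)) = (Φ ((finRotate (m'+2))⁻¹))⁻¹ := by
              rw [map_inv, inv_inv]
            rw [h1]
            exact Subgroup.inv_mem _ (Subgroup.subset_closure hg1)
          · have h01 : finRotate (m'+2) (0 : Fin (m'+2)) = 1 := by
              rw [finRotate_succ_apply, zero_add]
            rw [h01]
            exact Subgroup.subset_closure hg2
        · rw [map_one]; exact Subgroup.one_mem _
        · intro a b _ _ ha hb
          rw [map_mul]
          exact Subgroup.mul_mem _ ha hb
        · intro a _ ha
          rw [map_inv]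
          exact Subgroup.inv_mem _ ha
  exact ⟨(MulEquiv.subgroupCongr key).trans
    (MonoidHom.ofInjective (Equiv.Perm.viaEmbeddingHom_injective (Fin.castLEEmb hmn))).symm⟩
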